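/- If a word w of length n has a border u which is a palindrome with |u| ≥ n/2, then w is a palindromic periodicity: there exist palindromes s and t such that w is a factor of (st)^ω and |w| ≥ |st|. -/
import Mathlib


/-- `w` (of length `n`) is a palindromic periodicity with period `p`: there are
palindromes `s` (length `sl`) and `t` (length `p - sl`), encoded as the word
`u = st` of length `p`, such that `w` is a factor of `(st)^ω` and `|w| ≥ p`. -/
def PalPer {α : Type*} (w : ℕ → α) (n p : ℕ) : Prop :=
  0 < p ∧ p ≤ n ∧
    ∃ (sl : ℕ) (u : ℕ → α) (k : ℕ), sl ≤ p ∧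
      (∀ i j, i + j + 1 = sl → u i = u j) ∧
      (∀ i j, sl ≤ i → sl ≤ j → i + j + 1 = sl + p → u i = u j) ∧
      (∀ i < n, w i = u ((k + i) % p))

/-- If a word `w` of length `n` has a border `u` (its length-`m` prefix equals
its length-`m` suffix) which is a palindrome with `m ≥ n/2`, then `w` is a
palindromic periodicity: there are palindromes `s`, `t` with `|w| ≥ |st|` such
that `w` is a factor of `(st)^ω`. -/
theorem stmt_18 {α : Type*} (w : ℕ → α) (n m : ℕ) (hn : 0 < n)
    (hm : m ≤ n) (h2 : n ≤ 2 * m)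
    (hborder : ∀ i < m, w i = w (n - m + i))
    (hupal : ∀ i j, i + j + 1 = m → w i = w j) :
    ∃ p, PalPer w n p := by
  rcases eq_or_lt_of_le hm with heq | hlt
  · -- m = n : w itself is a palindrome, take p = n, s = w, t = ε
    refine ⟨n, hn, le_refl n, n, w, 0, le_refl n, ?_, ?_, ?_⟩
    · intro i j hij
      exact hupal i j (by omega)
    · intro i j hi hj hij
      omega
    · intro i hi
      rw [Nat.zero_add, Nat.mod_eq_of_lt hi]
  · -- m < n : period p = n - m
    set p := n - m with hp
    have hp0 : 0 < p := by omega
    have hpm : p ≤ m := by omega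
    have hper : ∀ i, i < n → w i = w (i % p) := by
      intro i
      induction i using Nat.strong_induction_on with
      | _ i ih =>
        intro hi
        by_cases h : i < p
        · rw [Nat.mod_eq_of_lt h]
        · have h1 : i - p < m := by omega
          have hb := hborder (i - p) h1
          have h2 : n - m + (i - p) = i := by omega
          rw [h2] at hb
          have h3 : i % p = (i - p) % p := Nat.mod_eq_sub_mod (by omega)
          rw [← hb, h3]
          exact ih (i - p) (by omega) (by omega)
    have hq := Nat.div_add_mod m p
    have hq1 : 1 ≤ m / p := (Nat.one_le_div_iff hp0).mpr hpm
    have hr : m % p < p := Nat.mod_lt _ hp0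
    refine ⟨p, hp0, by omega, m % p, w, 0, le_of_lt hr, ?_, ?_, ?_⟩
    · intro i j hij
      have h1 := hupal i (m - 1 - i) (by omega)
      have h2 : m - 1 - i = p * (m / p) + j := by omega
      have h3 := hper (p * (m / p) + j) (by omega)
      rw [h2] at h1
      rw [h1, h3, Nat.mul_add_mod, Nat.mod_eq_of_lt (by omega)]
    · intro i j hi hj hij
      obtain ⟨c, hc⟩ : ∃ c, m / p = c + 1 := ⟨m / p - 1, by omega⟩
      rw [hc, Nat.mul_add, Nat.mul_one] at hq
      have h1 := hupal i (m - 1 - i) (by omega)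
      have h2 : m - 1 - i = p * c + j := by omega
      have h3 := hper (p * c + j) (by omega)
      rw [h2] at h1
      rw [h1, h3, Nat.mul_add_mod, Nat.mod_eq_of_lt (by omega)]
    · intro i hi
      rw [Nat.zero_add]
      exact hper i hi
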